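/- arXiv:1005.5646 — 2 statements merged into one kernel-verified Lean document; each statement's English description precedes it below -/
import Mathlib

section
/- Lyapunov's disconjugacy criterion: if q(t) ≥ 0 on [a,b] and ∫_a^b q(t) dt ≤ 4/(b-a), then the equation x'' + q(t)x = 0 is disconjugate on [a,b]. -/
open Set MeasureTheory intervalIntegral

/-- `x` is a solution of `x'' + p x' + q x = 0` on the set `J`. -/
def IsSolOn (p q x : ℝ → ℝ) (J : Set ℝ) : Prop :=
  (∀ t ∈ J, HasDerivAt x (deriv x t) t) ∧
  (∀ t ∈ J, HasDerivAt (deriv x) (deriv (deriv x) t) t) ∧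
  (∀ t ∈ J, deriv (deriv x) t + p t * deriv x t + q t * x t = 0)

/-- The equation `x'' + p x' + q x = 0` is disconjugate on `J`:
every solution that is not identically zero on `J` has at most one zero in `J`. -/
def DisconjOn (p q : ℝ → ℝ) (J : Set ℝ) : Prop :=
  ∀ x : ℝ → ℝ, IsSolOn p q x J → (∃ t ∈ J, x t ≠ 0) →
    ∀ s ∈ J, x s = 0 → ∀ r ∈ J, x r = 0 → s = r

lemma lyap_taylor {a b s t : ℝ} {q x : ℝ → ℝ} (hab : a ≤ b)
    (hqint : IntervalIntegrable q volume a b)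
    (hx1 : ∀ u ∈ Icc a b, HasDerivAt x (deriv x u) u)
    (hx2 : ∀ u ∈ Icc a b, HasDerivAt (deriv x) (deriv (deriv x) u) u)
    (hx3 : ∀ u ∈ Icc a b, deriv (deriv x) u = -(q u * x u))
    (hs : s ∈ Icc a b) (ht : t ∈ Icc a b) :
    x t = x s + deriv x s * (t - s) - ∫ σ in s..t, (t - σ) * (q σ * x σ) := by
  have hsub' : uIcc s t ⊆ uIcc a b :=
    uIcc_subset_uIcc (by rwa [uIcc_of_le hab]) (by rwa [uIcc_of_le hab])
  have hsub : uIcc s t ⊆ Icc a b := by rwa [uIcc_of_le hab] at hsub'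
  have hxc : ContinuousOn x (Icc a b) := fun u hu => (hx1 u hu).continuousAt.continuousWithinAt
  have hwc : ContinuousOn (deriv x) (Icc a b) :=
    fun u hu => (hx2 u hu).continuousAt.continuousWithinAt
  have hint : IntervalIntegrable (fun σ => -(q σ * x σ)) volume s t :=
    ((hqint.mono_set hsub').mul_continuousOn (hxc.mono hsub)).neg
  have hwint : IntervalIntegrable (deriv x) volume s t :=
    (hwc.mono hsub).intervalIntegrable
  have IBP := intervalIntegral.integral_mul_deriv_eq_deriv_mul
    (u := fun σ => t - σ) (v := deriv x) (u' := fun _ => (-1 : ℝ))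
    (v' := fun σ => -(q σ * x σ))
    (fun σ _ => by simpa using ((hasDerivAt_id σ).const_sub t))
    (fun σ hσ => by have h := hx2 σ (hsub hσ); rw [hx3 σ (hsub hσ)] at h; exact h)
    intervalIntegrable_const hint (a := s) (b := t)
  have FTC : ∫ σ in s..t, deriv x σ = x t - x s :=
    integral_eq_sub_of_hasDerivAt (fun σ hσ => hx1 σ (hsub hσ)) hwint
  have hneg : ∫ σ in s..t, (-1 : ℝ) * deriv x σ = -(x t - x s) := by
    rw [← FTC, ← intervalIntegral.integral_neg]; congr 1; ext σ; ring
  have hEq : ∫ σ in s..t, (t - σ) * (q σ * x σ) = - ∫ σ in s..t, (t - σ) * -(q σ * x σ) := by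
    rw [← intervalIntegral.integral_neg]; congr 1; ext σ; ring
  rw [hEq]
  rw [hneg] at IBP
  rw [IBP]; ring

lemma lyap_int_bound {a b u v C : ℝ} {q f : ℝ → ℝ} (hab : a < b)
    (hqint : IntervalIntegrable q volume a b)
    (hq : ∀ t ∈ Icc a b, 0 ≤ q t)
    (hu : u ∈ Icc a b) (hv : v ∈ Icc a b) (huv : u ≤ v)
    (hI5 : IntervalIntegrable f volume u v) (hC : 0 ≤ C)
    (hbd : ∀ σ ∈ Icc u v, |f σ| ≤ C * q σ) :
    |∫ σ in u..v, f σ| ≤ C * ∫ σ in a..b, q σ := by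
  have hsub' : uIcc u v ⊆ uIcc a b :=
    uIcc_subset_uIcc (by rwa [uIcc_of_le hab.le]) (by rwa [uIcc_of_le hab.le])
  have h1 : |∫ σ in u..v, f σ| ≤ ∫ σ in u..v, |f σ| := abs_integral_le_integral_abs huv
  have h2 : ∫ σ in u..v, |f σ| ≤ ∫ σ in u..v, C * q σ :=
    integral_mono_on huv hI5.abs ((hqint.mono_set hsub').const_mul C) hbd
  have h3 : ∫ σ in u..v, C * q σ = C * ∫ σ in u..v, q σ := intervalIntegral.integral_const_mul _ _
  have h4 : ∫ σ in u..v, q σ ≤ ∫ σ in a..b, q σ :=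
    integral_mono_interval hu.1 huv hv.2
      (ae_restrict_of_forall_mem measurableSet_Ioc fun σ hσ => hq σ (Ioc_subset_Icc_self hσ))
      hqint
  calc |∫ σ in u..v, f σ| ≤ ∫ σ in u..v, |f σ| := h1
    _ ≤ C * ∫ σ in u..v, q σ := by rw [← h3]; exact h2
    _ ≤ C * ∫ σ in a..b, q σ := mul_le_mul_of_nonneg_left h4 hC

lemma lyap_step {a b c : ℝ} {q x : ℝ → ℝ} (hab : a < b)
    (hqint : IntervalIntegrable q volume a b)
    (hq : ∀ t ∈ Icc a b, 0 ≤ q t)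
    (hbound : ∫ t in a..b, q t ≤ 4 / (b - a))
    (hx1 : ∀ u ∈ Icc a b, HasDerivAt x (deriv x u) u)
    (hx2 : ∀ u ∈ Icc a b, HasDerivAt (deriv x) (deriv (deriv x) u) u)
    (hx3 : ∀ u ∈ Icc a b, deriv (deriv x) u = -(q u * x u))
    (hc : c ∈ Icc a b) (hxc : x c = 0) (hwc : deriv x c = 0) :
    ∀ t ∈ Icc (max a (c - (b - a)/8)) (min b (c + (b - a)/8)), x t = 0 := by
  have hba : (0:ℝ) < b - a := by linarith
  set δ : ℝ := (b - a)/8 with hδ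
  have hδpos : 0 < δ := by positivity
  set a' : ℝ := max a (c - δ)
  set b' : ℝ := min b (c + δ)
  have ha' : a ≤ a' := le_max_left _ _
  have hb' : b' ≤ b := min_le_left _ _
  have ha'c : a' ≤ c := max_le hc.1 (by linarith)
  have hcb' : c ≤ b' := le_min hc.2 (by linarith)
  have hJsub : Icc a' b' ⊆ Icc a b := Icc_subset_Icc ha' hb'
  have hxcont : ContinuousOn x (Icc a b) :=
    fun u hu => (hx1 u hu).continuousAt.continuousWithinAt
  obtain ⟨m, hmJ, hmax⟩ := isCompact_Icc.exists_isMaxOn (nonempty_Icc.mpr (ha'c.trans hcb'))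
    ((hxcont.mono hJsub).abs)
  have hmax' : ∀ u ∈ Icc a' b', |x u| ≤ |x m| := isMaxOn_iff.mp hmax
  have hQ : ∫ t in a..b, q t ≤ 4 / (b - a) := hbound
  -- key pointwise bound
  have key : ∀ t ∈ Icc a' b', |x t| ≤ |x m| / 2 := by
    intro t ht
    have htab : t ∈ Icc a b := hJsub ht
    have htay := lyap_taylor hab.le hqint hx1 hx2 hx3 hc htab
    rw [hxc, hwc] at htay
    have hxt : |x t| = |∫ σ in c..t, (t - σ) * (q σ * x σ)| := by
      rw [htay]; rw [abs_sub_comm]; congr 1; ring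
    have hMnn : 0 ≤ |x m| := abs_nonneg _
    have hCnn : 0 ≤ δ * |x m| := by positivity
    have hcJ : c ∈ Icc a' b' := ⟨ha'c, hcb'⟩
    have hsub'' : uIcc c t ⊆ uIcc a b :=
      uIcc_subset_uIcc (by rwa [uIcc_of_le hab.le]) (by rwa [uIcc_of_le hab.le])
    have hI5 : IntervalIntegrable (fun σ => (t - σ) * (q σ * x σ)) volume c t := by
      apply IntervalIntegrable.continuousOn_mul
      · exact (hqint.mono_set hsub'').mul_continuousOn
          (hxcont.mono (by rwa [← uIcc_of_le hab.le]))
      · exact (continuous_const.sub continuous_id).continuousOn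
    have hbd : ∀ σ ∈ uIcc c t, |(t - σ) * (q σ * x σ)| ≤ δ * |x m| * q σ := by
      intro σ hσ
      have hσJ : σ ∈ Icc a' b' := Set.ordConnected_Icc.uIcc_subset hcJ ht hσ
      have hσab : σ ∈ Icc a b := hJsub hσJ
      have h1 : |t - σ| ≤ δ := by
        have h2a : c - δ ≤ t := le_trans (le_max_right a (c - δ)) ht.1
        have h2b : t ≤ c + δ := le_trans ht.2 (min_le_right b (c + δ))
        rcases le_total c t with h | h
        · have : σ ∈ Icc c t := by rwa [uIcc_of_le h] at hσ
          rw [abs_le]; constructor <;> [linarith [this.1, this.2]; linarith [this.1, this.2]]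
        · have : σ ∈ Icc t c := by rwa [uIcc_of_ge h] at hσ
          rw [abs_le]; constructor <;> [linarith [this.1, this.2]; linarith [this.1, this.2]]
      have h2 : |x σ| ≤ |x m| := hmax' σ hσJ
      have h3 : 0 ≤ q σ := hq σ hσab
      have : |(t - σ) * (q σ * x σ)| = |t - σ| * (q σ * |x σ|) := by
        rw [abs_mul, abs_mul, abs_of_nonneg h3]
      rw [this]
      nlinarith [mul_nonneg (sub_nonneg.2 h1) (mul_nonneg h3 (abs_nonneg (x σ))),
        mul_nonneg (mul_nonneg hδpos.le h3) (sub_nonneg.2 h2)]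
    have hhalf : δ * |x m| * (4 / (b - a)) = |x m| / 2 := by
      rw [hδ]; field_simp; ring
    have hQnn : 0 ≤ ∫ u in a..b, q u :=
      intervalIntegral.integral_nonneg hab.le fun u hu => hq u hu
    rcases le_total c t with h | h
    · have := lyap_int_bound hab hqint hq hc htab h hI5 hCnn
        (fun σ hσ => hbd σ (by rwa [uIcc_of_le h]))
      rw [hxt]
      calc |∫ σ in c..t, (t - σ) * (q σ * x σ)| ≤ δ * |x m| * ∫ u in a..b, q u := this
        _ ≤ δ * |x m| * (4 / (b - a)) := mul_le_mul_of_nonneg_left hbound hCnn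
        _ = |x m| / 2 := hhalf
    · have hsy : |∫ σ in c..t, (t - σ) * (q σ * x σ)|
          = |∫ σ in t..c, (t - σ) * (q σ * x σ)| := by
        rw [intervalIntegral.integral_symm, abs_neg]
      have := lyap_int_bound hab hqint hq htab hc h hI5.symm hCnn
        (fun σ hσ => hbd σ (by rw [uIcc_comm]; rwa [uIcc_of_le h]))
      rw [hxt, hsy]
      calc |∫ σ in t..c, (t - σ) * (q σ * x σ)| ≤ δ * |x m| * ∫ u in a..b, q u := this
        _ ≤ δ * |x m| * (4 / (b - a)) := mul_le_mul_of_nonneg_left hbound hCnn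
        _ = |x m| / 2 := hhalf
  have hM0 : |x m| ≤ 0 := by have := key m hmJ; linarith
  intro t ht
  have := (key t ht).trans (by linarith : |x m| / 2 ≤ 0)
  exact abs_nonpos_iff.mp this

lemma lyap_prop_fwd {a b c : ℝ} {q x : ℝ → ℝ} (hab : a < b)
    (hqint : IntervalIntegrable q volume a b)
    (hq : ∀ t ∈ Icc a b, 0 ≤ q t)
    (hbound : ∫ t in a..b, q t ≤ 4 / (b - a))
    (hx1 : ∀ u ∈ Icc a b, HasDerivAt x (deriv x u) u)
    (hx2 : ∀ u ∈ Icc a b, HasDerivAt (deriv x) (deriv (deriv x) u) u)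
    (hx3 : ∀ u ∈ Icc a b, deriv (deriv x) u = -(q u * x u))
    (hc : c ∈ Icc a b) (hxc : x c = 0) (hwc : deriv x c = 0) :
    ∀ t ∈ Icc c b, x t = 0 := by
  have hba : (0:ℝ) < b - a := by linarith
  set δ : ℝ := (b - a)/8 with hδ
  have hδpos : 0 < δ := by positivity
  set T : Set ℝ := {t | t ∈ Icc c b ∧ ∀ σ ∈ Icc c t, x σ = 0} with hT
  have hTc : c ∈ T := ⟨⟨le_refl c, hc.2⟩, fun σ hσ => by
    have : σ = c := le_antisymm hσ.2 hσ.1; rw [this]; exact hxc⟩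
  have hTne : T.Nonempty := ⟨c, hTc⟩
  have hTbdd : BddAbove T := ⟨b, fun t ht => ht.1.2⟩
  set τ : ℝ := sSup T with hτ
  have hcτ : c ≤ τ := le_csSup hTbdd hTc
  have hτb : τ ≤ b := csSup_le hTne fun t ht => ht.1.2
  have hτab : τ ∈ Icc a b := ⟨hc.1.trans hcτ, hτb⟩
  have hzero_lt : ∀ σ, c ≤ σ → σ < τ → x σ = 0 := by
    intro σ hcσ hστ
    obtain ⟨t, htT, hσt⟩ := exists_lt_of_lt_csSup hTne hστ
    exact htT.2 σ ⟨hcσ, hσt.le⟩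
  have hxτ : x τ = 0 := by
    rcases eq_or_lt_of_le hcτ with h | h
    · rw [← h]; exact hxc
    · have hclo : τ ∈ closure (Ico c τ) := by
        rw [closure_Ico h.ne]; exact ⟨hcτ, le_refl τ⟩
      haveI : (nhdsWithin τ (Ico c τ)).NeBot := mem_closure_iff_nhdsWithin_neBot.mp hclo
      have h1 : Filter.Tendsto x (nhdsWithin τ (Ico c τ)) (nhds (x τ)) :=
        ((hx1 τ hτab).continuousAt.continuousWithinAt).tendsto
      have h2 : Filter.Tendsto x (nhdsWithin τ (Ico c τ)) (nhds 0) := by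
        apply Filter.Tendsto.congr' _ tendsto_const_nhds
        filter_upwards [self_mem_nhdsWithin] with σ hσ
        exact (hzero_lt σ hσ.1 hσ.2).symm
      exact tendsto_nhds_unique h1 h2
  have hzero_le : ∀ σ ∈ Icc c τ, x σ = 0 := by
    intro σ hσ
    rcases eq_or_lt_of_le hσ.2 with h | h
    · rw [h]; exact hxτ
    · exact hzero_lt σ hσ.1 h
  have hwτ : deriv x τ = 0 := by
    have hsub : uIcc c τ ⊆ Icc a b := by
      rw [uIcc_of_le hcτ]; exact Icc_subset_Icc hc.1 hτb
    have hzero' : EqOn (fun σ => -(q σ * x σ)) (fun _ => (0:ℝ)) (uIcc c τ) := by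
      intro σ hσ
      rw [uIcc_of_le hcτ] at hσ
      simp [hzero_le σ hσ]
    have hint : IntervalIntegrable (fun σ => -(q σ * x σ)) volume c τ := by
      have hsub' : uIcc c τ ⊆ uIcc a b := by rwa [uIcc_of_le hab.le]
      have hxcont : ContinuousOn x (Icc a b) :=
        fun u hu => (hx1 u hu).continuousAt.continuousWithinAt
      exact ((hqint.mono_set hsub').mul_continuousOn (hxcont.mono hsub)).neg
    have FTC : ∫ σ in c..τ, -(q σ * x σ) = deriv x τ - deriv x c :=
      integral_eq_sub_of_hasDerivAt
        (fun σ hσ => by have h := hx2 σ (hsub hσ); rw [hx3 σ (hsub hσ)] at h; exact h) hint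
    rw [intervalIntegral.integral_congr hzero', intervalIntegral.integral_const] at FTC
    rw [hwc] at FTC
    simpa using FTC.symm
  have hτT : τ ∈ T := ⟨⟨hcτ, hτb⟩, hzero_le⟩
  have hτeqb : τ = b := by
    by_contra hne
    have hτltb : τ < b := lt_of_le_of_ne hτb hne
    have hstep := lyap_step hab hqint hq hbound hx1 hx2 hx3 hτab hxτ hwτ
    set t' : ℝ := min b (τ + δ) with ht'
    have hτt' : τ < t' := lt_min hτltb (by linarith)
    have ht'T : t' ∈ T := by
      refine ⟨⟨hcτ.trans hτt'.le, min_le_left _ _⟩, ?_⟩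
      intro σ hσ
      rcases le_total σ τ with h | h
      · exact hzero_le σ ⟨hσ.1, h⟩
      · apply hstep
        constructor
        · exact max_le (hc.1.trans (hcτ.trans h)) (by linarith)
        · refine le_min (hσ.2.trans (min_le_left _ _)) (hσ.2.trans (min_le_right _ _))
    have : t' ≤ τ := le_csSup hTbdd ht'T
    linarith
  intro t ht
  exact hzero_le t ⟨ht.1, by rw [hτeqb]; exact ht.2⟩

lemma lyap_prop_bwd {a b c : ℝ} {q x : ℝ → ℝ} (hab : a < b)
    (hqint : IntervalIntegrable q volume a b)
    (hq : ∀ t ∈ Icc a b, 0 ≤ q t)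
    (hbound : ∫ t in a..b, q t ≤ 4 / (b - a))
    (hx1 : ∀ u ∈ Icc a b, HasDerivAt x (deriv x u) u)
    (hx2 : ∀ u ∈ Icc a b, HasDerivAt (deriv x) (deriv (deriv x) u) u)
    (hx3 : ∀ u ∈ Icc a b, deriv (deriv x) u = -(q u * x u))
    (hc : c ∈ Icc a b) (hxc : x c = 0) (hwc : deriv x c = 0) :
    ∀ t ∈ Icc a c, x t = 0 := by
  have hba : (0:ℝ) < b - a := by linarith
  set δ : ℝ := (b - a)/8 with hδ
  have hδpos : 0 < δ := by positivity
  set T : Set ℝ := {t | t ∈ Icc a c ∧ ∀ σ ∈ Icc t c, x σ = 0} with hT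
  have hTc : c ∈ T := ⟨⟨hc.1, le_refl c⟩, fun σ hσ => by
    have : σ = c := le_antisymm hσ.2 hσ.1; rw [this]; exact hxc⟩
  have hTne : T.Nonempty := ⟨c, hTc⟩
  have hTbdd : BddBelow T := ⟨a, fun t ht => ht.1.1⟩
  set τ : ℝ := sInf T with hτ
  have hcτ : τ ≤ c := csInf_le hTbdd hTc
  have hτa : a ≤ τ := le_csInf hTne fun t ht => ht.1.1
  have hτab : τ ∈ Icc a b := ⟨hτa, hcτ.trans hc.2⟩
  have hzero_lt : ∀ σ, σ ≤ c → τ < σ → x σ = 0 := by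
    intro σ hcσ hστ
    obtain ⟨t, htT, hσt⟩ := exists_lt_of_csInf_lt hTne hστ
    exact htT.2 σ ⟨hσt.le, hcσ⟩
  have hxτ : x τ = 0 := by
    rcases eq_or_lt_of_le hcτ with h | h
    · rw [h]; exact hxc
    · have hclo : τ ∈ closure (Ioc τ c) := by
        rw [closure_Ioc h.ne]; exact ⟨le_refl τ, hcτ⟩
      haveI : (nhdsWithin τ (Ioc τ c)).NeBot := mem_closure_iff_nhdsWithin_neBot.mp hclo
      have h1 : Filter.Tendsto x (nhdsWithin τ (Ioc τ c)) (nhds (x τ)) :=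
        ((hx1 τ hτab).continuousAt.continuousWithinAt).tendsto
      have h2 : Filter.Tendsto x (nhdsWithin τ (Ioc τ c)) (nhds 0) := by
        apply Filter.Tendsto.congr' _ tendsto_const_nhds
        filter_upwards [self_mem_nhdsWithin] with σ hσ
        exact (hzero_lt σ hσ.2 hσ.1).symm
      exact tendsto_nhds_unique h1 h2
  have hzero_le : ∀ σ ∈ Icc τ c, x σ = 0 := by
    intro σ hσ
    rcases eq_or_lt_of_le hσ.1 with h | h
    · rw [← h]; exact hxτ
    · exact hzero_lt σ hσ.2 h
  have hwτ : deriv x τ = 0 := by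
    have hsub : uIcc c τ ⊆ Icc a b := by
      rw [uIcc_of_ge hcτ]; exact Icc_subset_Icc hτa hc.2
    have hzero' : EqOn (fun σ => -(q σ * x σ)) (fun _ => (0:ℝ)) (uIcc c τ) := by
      intro σ hσ
      rw [uIcc_of_ge hcτ] at hσ
      simp [hzero_le σ hσ]
    have hint : IntervalIntegrable (fun σ => -(q σ * x σ)) volume c τ := by
      have hsub' : uIcc c τ ⊆ uIcc a b := by rwa [uIcc_of_le hab.le]
      have hxcont : ContinuousOn x (Icc a b) :=
        fun u hu => (hx1 u hu).continuousAt.continuousWithinAt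
      exact ((hqint.mono_set hsub').mul_continuousOn (hxcont.mono hsub)).neg
    have FTC : ∫ σ in c..τ, -(q σ * x σ) = deriv x τ - deriv x c :=
      integral_eq_sub_of_hasDerivAt
        (fun σ hσ => by have h := hx2 σ (hsub hσ); rw [hx3 σ (hsub hσ)] at h; exact h) hint
    rw [intervalIntegral.integral_congr hzero', intervalIntegral.integral_const] at FTC
    rw [hwc] at FTC
    simpa using FTC.symm
  have hτeqa : τ = a := by
    by_contra hne
    have hτlta : a < τ := lt_of_le_of_ne hτa (Ne.symm hne)
    have hstep := lyap_step hab hqint hq hbound hx1 hx2 hx3 hτab hxτ hwτ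
    set t' : ℝ := max a (τ - δ) with ht'
    have hτt' : t' < τ := max_lt hτlta (by linarith)
    have ht'T : t' ∈ T := by
      refine ⟨⟨le_max_left _ _, hτt'.le.trans hcτ⟩, ?_⟩
      intro σ hσ
      rcases le_total τ σ with h | h
      · exact hzero_le σ ⟨h, hσ.2⟩
      · apply hstep
        constructor
        · exact max_le (le_max_left a (τ - δ) |>.trans hσ.1) ((le_max_right a (τ - δ)).trans hσ.1)
        · exact le_min (h.trans (hcτ.trans hc.2)) (by linarith)
    have : τ ≤ t' := csInf_le hTbdd ht'T
    linarith
  intro t ht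
  exact hzero_le t ⟨by rw [hτeqa]; exact ht.1, ht.2⟩

lemma lyap_kernel_nonneg {s m r σ : ℝ} (h1 : s ≤ σ) (h2 : σ ≤ r) (hsm : s ≤ m) (hmr : m ≤ r) :
    0 ≤ (if σ ≤ m then (σ - s) * (r - m) else (m - s) * (r - σ)) := by
  split_ifs with h <;> nlinarith

lemma lyap_kernel_le {a b s m r σ : ℝ} (ha : a ≤ s) (hb : r ≤ b)
    (h1 : s ≤ σ) (h2 : σ ≤ r) (hsm : s ≤ m) (hmr : m ≤ r) (hsr : s < r) :
    (if σ ≤ m then (σ - s) * (r - m) else (m - s) * (r - σ)) ≤ (r - s) * (b - a) / 4 := by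
  have hba : 0 ≤ b - a - (r - s) := by linarith
  have e1 : 0 ≤ (r - s) * (b - a - (r - s)) := mul_nonneg (by linarith) hba
  split_ifs with h
  · nlinarith [sq_nonneg (r + s - 2*σ), mul_nonneg (sub_nonneg.2 h1) (sub_nonneg.2 h)]
  · push_neg at h
    nlinarith [sq_nonneg (r + s - 2*σ), mul_nonneg (sub_nonneg.2 h.le) (sub_nonneg.2 h2)]

lemma lyap_kernel_lt {a b s m r σ : ℝ} (ha : a ≤ s) (hb : r ≤ b)
    (h1 : s ≤ σ) (h2 : σ ≤ r) (hsm : s ≤ m) (hmr : m ≤ r) (hsr : s < r)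
    (hne : σ ≠ (a + b) / 2) :
    (if σ ≤ m then (σ - s) * (r - m) else (m - s) * (r - σ)) < (r - s) * (b - a) / 4 := by
  rcases lt_or_eq_of_le (show r - s ≤ b - a by linarith) with hlt | heq
  · have e1 : 0 < (r - s) * (b - a - (r - s)) := mul_pos (by linarith) (by linarith)
    split_ifs with h
    · nlinarith [sq_nonneg (r + s - 2*σ), mul_nonneg (sub_nonneg.2 h1) (sub_nonneg.2 h)]
    · push_neg at h
      nlinarith [sq_nonneg (r + s - 2*σ), mul_nonneg (sub_nonneg.2 h.le) (sub_nonneg.2 h2)]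
  · have hsa : s = a := by linarith
    have hrb : r = b := by linarith
    have h2σ : 2*σ ≠ s + r := by
      intro hcontra; apply hne; rw [hsa, hrb] at hcontra; linarith
    have hsq : 0 < (r + s - 2*σ) * (r + s - 2*σ) := by
      rcases lt_or_gt_of_ne h2σ with h5 | h5
      · exact mul_pos (by linarith) (by linarith)
      · exact mul_pos_of_neg_of_neg (by linarith) (by linarith)
    split_ifs with h
    · nlinarith [mul_nonneg (sub_nonneg.2 h1) (sub_nonneg.2 h)]
    · push_neg at h
      nlinarith [mul_nonneg (sub_nonneg.2 h.le) (sub_nonneg.2 h2)]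

set_option maxHeartbeats 2000000 in
lemma lyap_zero_between {a b s r : ℝ} {q x : ℝ → ℝ} (hab : a < b)
    (hqint : IntervalIntegrable q volume a b)
    (hq : ∀ t ∈ Icc a b, 0 ≤ q t)
    (hbound : ∫ t in a..b, q t ≤ 4 / (b - a))
    (hx1 : ∀ u ∈ Icc a b, HasDerivAt x (deriv x u) u)
    (hx2 : ∀ u ∈ Icc a b, HasDerivAt (deriv x) (deriv (deriv x) u) u)
    (hx3 : ∀ u ∈ Icc a b, deriv (deriv x) u = -(q u * x u))
    (hs : s ∈ Icc a b) (hr : r ∈ Icc a b) (hsr : s < r)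
    (hxs : x s = 0) (hxr : x r = 0) :
    ∀ t ∈ Icc s r, x t = 0 := by
  have hba : (0:ℝ) < b - a := by linarith
  have hxcont : ContinuousOn x (Icc a b) :=
    fun u hu => (hx1 u hu).continuousAt.continuousWithinAt
  have hsubJ : Icc s r ⊆ Icc a b := Icc_subset_Icc hs.1 hr.2
  obtain ⟨m, hmJ, hmax⟩ := isCompact_Icc.exists_isMaxOn (nonempty_Icc.mpr hsr.le)
    ((hxcont.mono hsubJ).abs)
  have hmax' : ∀ u ∈ Icc s r, |x u| ≤ |x m| := isMaxOn_iff.mp hmax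
  set M : ℝ := |x m| with hM
  rcases le_or_gt M 0 with hM0 | hM0
  · intro t ht
    exact abs_nonpos_iff.mp ((hmax' t ht).trans hM0)
  exfalso
  have hmab : m ∈ Icc a b := hsubJ hmJ
  have hsm : s < m := by
    rcases eq_or_lt_of_le hmJ.1 with h | h
    · exfalso; rw [hM, ← h, hxs] at hM0; simp at hM0
    · exact h
  have hmr : m < r := by
    rcases eq_or_lt_of_le hmJ.2 with h | h
    · exfalso; rw [hM, h, hxr] at hM0; simp at hM0
    · exact h
  -- integrability helpers
  have hqxI : ∀ u v : ℝ, u ∈ Icc a b → v ∈ Icc a b →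
      IntervalIntegrable (fun σ => q σ * x σ) volume u v := by
    intro u v hu hv
    have hsub' : uIcc u v ⊆ uIcc a b :=
      uIcc_subset_uIcc (by rwa [uIcc_of_le hab.le]) (by rwa [uIcc_of_le hab.le])
    exact (hqint.mono_set hsub').mul_continuousOn
      (hxcont.mono (by rwa [uIcc_of_le hab.le] at hsub'))
  set K : ℝ → ℝ := fun σ => if σ ≤ m then (σ - s) * (r - m) else (m - s) * (r - σ) with hK
  have hKcont : Continuous K := by
    apply Continuous.if_le (by continuity) (by continuity) continuous_id continuous_const
    intro σ hσ
    simp only [id_eq] at hσ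
    rw [hσ]
  have hI1 : IntervalIntegrable (fun σ => (r - σ) * (q σ * x σ)) volume s m :=
    (hqxI s m hs hmab).continuousOn_mul (by fun_prop)
  have hI2 : IntervalIntegrable (fun σ => (r - σ) * (q σ * x σ)) volume m r :=
    (hqxI m r hmab hr).continuousOn_mul (by fun_prop)
  have hI4 : IntervalIntegrable (fun σ => (m - σ) * (q σ * x σ)) volume s m :=
    (hqxI s m hs hmab).continuousOn_mul (by fun_prop)
  have hI5a : IntervalIntegrable (fun σ => K σ * (q σ * x σ)) volume s m :=
    (hqxI s m hs hmab).continuousOn_mul hKcont.continuousOn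
  have hI5b : IntervalIntegrable (fun σ => K σ * (q σ * x σ)) volume m r :=
    (hqxI m r hmab hr).continuousOn_mul hKcont.continuousOn
  have hI5 : IntervalIntegrable (fun σ => K σ * (q σ * x σ)) volume s r :=
    hI5a.trans hI5b
  -- Taylor identities
  have htayr := lyap_taylor hab.le hqint hx1 hx2 hx3 hs hr
  rw [hxr, hxs] at htayr
  have htaym := lyap_taylor hab.le hqint hx1 hx2 hx3 hs hmab
  rw [hxs] at htaym
  have hA : deriv x s * (r - s)
      = (∫ σ in s..m, (r - σ) * (q σ * x σ)) + ∫ σ in m..r, (r - σ) * (q σ * x σ) := by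
    rw [integral_add_adjacent_intervals hI1 hI2]
    linarith [htayr]
  have hB : x m = deriv x s * (m - s) - ∫ σ in s..m, (m - σ) * (q σ * x σ) := by
    linarith [htaym]
  have hleft : ∫ σ in s..m, K σ * (q σ * x σ)
      = (m - s) * (∫ σ in s..m, (r - σ) * (q σ * x σ))
        - (r - s) * ∫ σ in s..m, (m - σ) * (q σ * x σ) := by
    rw [← intervalIntegral.integral_const_mul, ← intervalIntegral.integral_const_mul,
      ← intervalIntegral.integral_sub (hI1.const_mul _) (hI4.const_mul _)]
    apply intervalIntegral.integral_congr
    intro σ hσ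
    rw [uIcc_of_le hsm.le] at hσ
    simp only [hK]
    rw [if_pos hσ.2]
    ring
  have hright : ∫ σ in m..r, K σ * (q σ * x σ)
      = (m - s) * ∫ σ in m..r, (r - σ) * (q σ * x σ) := by
    rw [← intervalIntegral.integral_const_mul]
    apply intervalIntegral.integral_congr
    intro σ hσ
    rw [uIcc_of_le hmr.le] at hσ
    by_cases h : σ ≤ m
    · have hσm : σ = m := le_antisymm h hσ.1
      subst hσm
      simp only [hK, if_pos le_rfl]; ring
    · simp only [hK, if_neg h]; ring
  have hGreen : (r - s) * x m = ∫ σ in s..r, K σ * (q σ * x σ) := by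
    rw [← integral_add_adjacent_intervals hI5a hI5b, hleft, hright]
    linear_combination (r - s) * hB + (m - s) * hA
  -- kernel estimates
  have hKnn : ∀ σ ∈ Icc s r, 0 ≤ K σ := fun σ hσ =>
    lyap_kernel_nonneg hσ.1 hσ.2 hsm.le hmr.le
  have hKle : ∀ σ ∈ Icc s r, K σ ≤ (r - s) * (b - a) / 4 := fun σ hσ =>
    lyap_kernel_le hs.1 hr.2 hσ.1 hσ.2 hsm.le hmr.le hsr
  have hKlt : ∀ σ ∈ Icc s r, σ ≠ (a + b)/2 → K σ < (r - s) * (b - a) / 4 := fun σ hσ hne =>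
    lyap_kernel_lt hs.1 hr.2 hσ.1 hσ.2 hsm.le hmr.le hsr hne
  -- contradiction via equality analysis
  set C : ℝ := (r - s) * (b - a) / 4 * M with hC
  have hCnn : 0 ≤ C := by
    have h0 : (0:ℝ) < r - s := by linarith
    positivity
  have hfabs : ∀ σ ∈ Icc s r, |K σ * (q σ * x σ)| = K σ * q σ * |x σ| := by
    intro σ hσ
    rw [abs_mul, abs_mul, abs_of_nonneg (hKnn σ hσ), abs_of_nonneg (hq σ (hsubJ hσ))]
    ring
  have hfg : ∀ σ ∈ Icc s r, |K σ * (q σ * x σ)| ≤ C * q σ := by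
    intro σ hσ
    rw [hfabs σ hσ, hC]
    have e1 := hKnn σ hσ
    have e2 := hKle σ hσ
    have e3 := hq σ (hsubJ hσ)
    have e4 := hmax' σ hσ
    nlinarith [mul_nonneg (mul_nonneg e1 e3) (sub_nonneg.2 e4),
      mul_nonneg (mul_nonneg (sub_nonneg.2 e2) e3) hM0.le]
  have hgint : IntervalIntegrable (fun σ => C * q σ) volume s r := by
    have hsub' : uIcc s r ⊆ uIcc a b :=
      uIcc_subset_uIcc (by rwa [uIcc_of_le hab.le]) (by rwa [uIcc_of_le hab.le])
    exact (hqint.mono_set hsub').const_mul C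
  have hqnnae : 0 ≤ᵐ[volume.restrict (Ioc s r)] q :=
    ae_restrict_of_forall_mem measurableSet_Ioc fun σ hσ =>
      hq σ (hsubJ (Ioc_subset_Icc_self hσ))
  have h1 : (r - s) * M ≤ ∫ σ in s..r, |K σ * (q σ * x σ)| := by
    have e0 : |(r - s) * x m| = (r - s) * M := by
      rw [abs_mul, abs_of_nonneg (by linarith : (0:ℝ) ≤ r - s)]
    calc (r - s) * M = |(r - s) * x m| := e0.symm
      _ = |∫ σ in s..r, K σ * (q σ * x σ)| := by rw [hGreen]
      _ ≤ ∫ σ in s..r, |K σ * (q σ * x σ)| := abs_integral_le_integral_abs hsr.le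
  have h2 : ∫ σ in s..r, |K σ * (q σ * x σ)| ≤ ∫ σ in s..r, C * q σ :=
    integral_mono_on hsr.le hI5.abs hgint hfg
  have h3 : ∫ σ in s..r, C * q σ ≤ (r - s) * M := by
    rw [intervalIntegral.integral_const_mul]
    have h4 : ∫ σ in s..r, q σ ≤ ∫ σ in a..b, q σ :=
      integral_mono_interval hs.1 hsr.le hr.2
        (ae_restrict_of_forall_mem measurableSet_Ioc fun σ hσ =>
          hq σ (Ioc_subset_Icc_self hσ)) hqint
    have h5 : C * ∫ σ in s..r, q σ ≤ C * (4 / (b - a)) :=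
      mul_le_mul_of_nonneg_left (h4.trans hbound) hCnn
    calc C * ∫ σ in s..r, q σ ≤ C * (4 / (b - a)) := h5
      _ = (r - s) * M := by rw [hC]; field_simp
  -- equality of integrals
  have hgf_int : Integrable (fun σ => C * q σ - |K σ * (q σ * x σ)|)
      (volume.restrict (Ioc s r)) := by
    exact (hgint.1).sub (hI5.abs.1)
  have heq : ∫ σ in Ioc s r, (C * q σ - |K σ * (q σ * x σ)|) = 0 := by
    have e0 : ∫ σ in s..r, |K σ * (q σ * x σ)| = ∫ σ in s..r, C * q σ :=
      le_antisymm h2 (by linarith)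
    rw [intervalIntegral.integral_of_le hsr.le, intervalIntegral.integral_of_le hsr.le] at e0
    rw [MeasureTheory.integral_sub hgint.1 hI5.abs.1, e0, sub_self]
  have hnnae : 0 ≤ᵐ[volume.restrict (Ioc s r)]
      fun σ => C * q σ - |K σ * (q σ * x σ)| :=
    ae_restrict_of_forall_mem measurableSet_Ioc fun σ hσ =>
      sub_nonneg.2 (hfg σ (Ioc_subset_Icc_self hσ))
  have hae : (fun σ => C * q σ - |K σ * (q σ * x σ)|) =ᵐ[volume.restrict (Ioc s r)] 0 :=
    (MeasureTheory.integral_eq_zero_iff_of_nonneg_ae hnnae hgf_int).mp heq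
  have hmid : ∀ᵐ σ ∂(volume.restrict (Ioc s r)), σ ≠ (a + b)/2 := by
    rw [MeasureTheory.ae_iff]
    simp only [not_not]
    have e1 : {σ : ℝ | σ = (a + b)/2} = {(a + b)/2} := by ext u; simp
    rw [e1, Measure.restrict_apply' measurableSet_Ioc]
    exact le_antisymm ((measure_mono inter_subset_left).trans (by simp)) zero_le
  have hqzero : q =ᵐ[volume.restrict (Ioc s r)] 0 := by
    filter_upwards [hae, ae_restrict_mem measurableSet_Ioc, hmid] with σ e1 e2 e3
    by_contra hq0
    have hσIcc : σ ∈ Icc s r := Ioc_subset_Icc_self e2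
    have hqpos : 0 < q σ := lt_of_le_of_ne (hq σ (hsubJ hσIcc)) (Ne.symm hq0)
    have e4 : |K σ * (q σ * x σ)| < C * q σ := by
      rw [hfabs σ hσIcc, hC]
      have e5 := hKlt σ hσIcc e3
      have e6 := hKnn σ hσIcc
      have e7 := hmax' σ hσIcc
      nlinarith [mul_pos (mul_pos (sub_pos.2 e5) hqpos) hM0,
        mul_nonneg (mul_nonneg e6 hqpos.le) (sub_nonneg.2 e7)]
    simp only [Pi.zero_apply] at e1
    linarith
  have hqz : ∫ σ in s..r, q σ = 0 := by
    rw [intervalIntegral.integral_of_le hsr.le]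
    exact MeasureTheory.integral_eq_zero_of_ae hqzero
  have hfinal : (r - s) * M ≤ 0 := by
    have e1 : ∫ σ in s..r, C * q σ = 0 := by
      rw [intervalIntegral.integral_const_mul, hqz, mul_zero]
    linarith
  nlinarith

/-- Lyapunov's disconjugacy criterion. -/
theorem lyapunov_criterion (a b : ℝ) (hab : a < b) (q : ℝ → ℝ)
    (hqint : IntervalIntegrable q volume a b)
    (hq : ∀ t ∈ Icc a b, 0 ≤ q t)
    (hbound : ∫ t in a..b, q t ≤ 4 / (b - a)) :
    DisconjOn (fun _ => 0) q (Icc a b) := by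
  intro x hsol hnz s hs hxs r hr hxr
  obtain ⟨hx1, hx2, hODE⟩ := hsol
  have hx3 : ∀ u ∈ Icc a b, deriv (deriv x) u = -(q u * x u) := by
    intro u hu
    have h := hODE u hu
    simp only [zero_mul] at h
    linarith
  by_contra hne
  obtain ⟨t₀, ht₀, hxt₀⟩ := hnz
  have key : ∀ s r : ℝ, s ∈ Icc a b → r ∈ Icc a b → s < r → x s = 0 → x r = 0 → False := by
    intro s r hs hr hsr hxs hxr
    have hzero := lyap_zero_between hab hqint hq hbound hx1 hx2 hx3 hs hr hsr hxs hxr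
    set c := (s + r)/2 with hc
    have hcJ : c ∈ Icc s r := ⟨by rw [hc]; linarith, by rw [hc]; linarith⟩
    have hcab : c ∈ Icc a b := ⟨hs.1.trans hcJ.1, hcJ.2.trans hr.2⟩
    have hxc : x c = 0 := hzero c hcJ
    have hwc : deriv x c = 0 := by
      have hev : x =ᶠ[nhds c] (fun _ => (0:ℝ)) := by
        have hmem : Ioo s r ∈ nhds c :=
          Ioo_mem_nhds (by rw [hc]; linarith) (by rw [hc]; linarith)
        filter_upwards [hmem] with u hu
        exact hzero u ⟨hu.1.le, hu.2.le⟩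
      have h0 : HasDerivAt x 0 c := (hasDerivAt_const c (0:ℝ)).congr_of_eventuallyEq hev
      exact (hx1 c hcab).unique h0
    rcases le_total t₀ c with h | h
    · exact hxt₀ (lyap_prop_bwd hab hqint hq hbound hx1 hx2 hx3 hcab hxc hwc t₀ ⟨ht₀.1, h⟩)
    · exact hxt₀ (lyap_prop_fwd hab hqint hq hbound hx1 hx2 hx3 hcab hxc hwc t₀ ⟨h, ht₀.2⟩)
  rcases lt_or_gt_of_ne hne with h | h
  · exact key s r hs hr h hxs hxr
  · exact key r s hr hs h hxr hxs
end

section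
/- Sharpness of the Lyapunov constant: for every ε > 0 there exists a continuous nonnegative function q on [0,1] with ∫_0^1 q(t) dt ≤ 4 + ε such that x'' + q(t)x = 0 has a nontrivial solution with two zeros in [0,1] (i.e., is not disconjugate on [0,1]). -/
open Set MeasureTheory intervalIntegral

noncomputable section LyapSharpAux

def Pp (δ s : ℝ) : ℝ := 1/2 - 3*δ/8 - 3/(4*δ) * s^2 + s^4/(8*δ^3)
def Pd (δ s : ℝ) : ℝ := -(3/(2*δ)) * s + s^3/(2*δ^3)
def Pdd (δ s : ℝ) : ℝ := -(3/(2*δ)) + 3*s^2/(2*δ^3)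

lemma glueDeriv {L R dL dR : ℝ → ℝ} {c : ℝ}
    (hL : ∀ t, HasDerivAt L (dL t) t) (hR : ∀ t, HasDerivAt R (dR t) t)
    (hval : L c = R c) (hder : dL c = dR c) (t : ℝ) :
    HasDerivAt (fun u => if u ≤ c then L u else R u)
      (if t ≤ c then dL t else dR t) t := by
  rcases lt_trichotomy t c with h | rfl | h
  · have hev : (fun u => if u ≤ c then L u else R u) =ᶠ[nhds t] L := by
      filter_upwards [Iio_mem_nhds h] with u hu
      simp [le_of_lt (mem_Iio.mp hu)]
    simpa [h.le] using (hL t).congr_of_eventuallyEq hev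
  · have hR' : HasDerivAt R (dL t) t := by rw [hder]; exact hR t
    have h1 : HasDerivWithinAt (fun u => if u ≤ t then L u else R u) (dL t) (Iic t) t :=
      (hL t).hasDerivWithinAt.congr (fun u hu => by simp [mem_Iic.mp hu]) (by simp)
    have h2 : HasDerivWithinAt (fun u => if u ≤ t then L u else R u) (dL t) (Ici t) t := by
      refine hR'.hasDerivWithinAt.congr (fun u hu => ?_) (by simp [hval])
      rcases eq_or_lt_of_le (mem_Ici.mp hu) with rfl | h'
      · simp [hval]
      · simp [not_le.mpr h']
    have h3 := h1.union h2
    rw [Iic_union_Ici] at h3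
    simpa using hasDerivWithinAt_univ.mp h3
  · have hev : (fun u => if u ≤ c then L u else R u) =ᶠ[nhds t] R := by
      filter_upwards [Ioi_mem_nhds h] with u hu
      simp [not_le.mpr (mem_Ioi.mp hu)]
    simpa [not_le.mpr h] using (hR t).congr_of_eventuallyEq hev

lemma hasDerivAt_Pp (δ t : ℝ) :
    HasDerivAt (fun u => Pp δ (u - 1/2)) (Pd δ (t - 1/2)) t := by
  have inner : HasDerivAt (fun u : ℝ => u - 1/2) 1 t := (hasDerivAt_id t).sub_const _
  have h2 : HasDerivAt (fun u : ℝ => (u - 1/2)^2) (2*(t - 1/2)) t := by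
    simpa using inner.fun_pow 2
  have h4 : HasDerivAt (fun u : ℝ => (u - 1/2)^4) (4*(t - 1/2)^3) t := by
    simpa using inner.fun_pow 4
  have key := ((h2.const_mul (3/(4*δ))).const_sub (1/2 - 3*δ/8)).add (h4.div_const (8*δ^3))
  have e : Pd δ (t - 1/2) = -(3/(4*δ) * (2*(t - 1/2))) + 4*(t - 1/2)^3/(8*δ^3) := by
    unfold Pd; ring
  rw [e]; exact key

lemma hasDerivAt_Pd (δ t : ℝ) :
    HasDerivAt (fun u => Pd δ (u - 1/2)) (Pdd δ (t - 1/2)) t := by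
  have inner : HasDerivAt (fun u : ℝ => u - 1/2) 1 t := (hasDerivAt_id t).sub_const _
  have h3 : HasDerivAt (fun u : ℝ => (u - 1/2)^3) (3*(t - 1/2)^2) t := by
    simpa using inner.fun_pow 3
  have key := (inner.const_mul (-(3/(2*δ)))).add (h3.div_const (2*δ^3))
  have e : Pdd δ (t - 1/2) = -(3/(2*δ)) * 1 + 3*(t - 1/2)^2/(2*δ^3) := by
    unfold Pdd; ring
  rw [e]; exact key

lemma Pp_pos {δ : ℝ} (hδ1 : 0 < δ) (hδ2 : δ ≤ 1/4) (s : ℝ) : 0 < Pp δ s := by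
  have hkey : Pp δ s = ((s^2 - 3*δ^2)^2 + 4*δ^3*(1 - 3*δ))/(8*δ^3) := by
    unfold Pp; field_simp; ring
  rw [hkey]
  have h0 : (0:ℝ) < 1 - 3*δ := by linarith
  have h1 : 0 < 4*δ^3*(1 - 3*δ) := by positivity
  positivity

lemma Pp_ge {δ : ℝ} (hδ1 : 0 < δ) {s : ℝ} (hs : s^2 ≤ δ^2) : 1/2 - δ ≤ Pp δ s := by
  have hkey : Pp δ s - (1/2 - δ) = ((δ^2 - s^2)*(5*δ^2 - s^2))/(8*δ^3) := by
    unfold Pp; field_simp; ring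
  have h1 : 0 ≤ ((δ^2 - s^2)*(5*δ^2 - s^2))/(8*δ^3) := by
    apply div_nonneg _ (by positivity)
    exact mul_nonneg (by linarith) (by nlinarith)
  linarith

lemma Pp_left {δ : ℝ} (hδ : δ ≠ 0) : Pp δ (-δ) = 1/2 - δ := by
  unfold Pp; field_simp; ring
lemma Pp_right {δ : ℝ} (hδ : δ ≠ 0) : Pp δ δ = 1/2 - δ := by
  unfold Pp; field_simp; ring
lemma Pd_left {δ : ℝ} (hδ : δ ≠ 0) : Pd δ (-δ) = 1 := by
  unfold Pd; field_simp; ring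
lemma Pd_right {δ : ℝ} (hδ : δ ≠ 0) : Pd δ δ = -1 := by
  unfold Pd; field_simp; ring
lemma Pdd_left {δ : ℝ} (hδ : δ ≠ 0) : Pdd δ (-δ) = 0 := by
  unfold Pdd; field_simp; ring
lemma Pdd_right {δ : ℝ} (hδ : δ ≠ 0) : Pdd δ δ = 0 := by
  unfold Pdd; field_simp; ring

end LyapSharpAux

noncomputable section LyapSharpAux2

def xf (δ : ℝ) : ℝ → ℝ := fun u =>
  if u ≤ 1/2 - δ then u else if u ≤ 1/2 + δ then Pp δ (u - 1/2) else 1 - u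
def xf1 (δ : ℝ) : ℝ → ℝ := fun u =>
  if u ≤ 1/2 - δ then 1 else if u ≤ 1/2 + δ then Pd δ (u - 1/2) else -1
def xf2 (δ : ℝ) : ℝ → ℝ := fun u =>
  if u ≤ 1/2 - δ then 0 else if u ≤ 1/2 + δ then Pdd δ (u - 1/2) else 0
def qf (δ : ℝ) : ℝ → ℝ := fun t =>
  max (3/(2*δ^3) * (δ^2 - (t - 1/2)^2)) 0 / Pp δ (t - 1/2)

lemma e_left (δ : ℝ) : (1/2 - δ : ℝ) - 1/2 = -δ := by ring
lemma e_right (δ : ℝ) : (1/2 + δ : ℝ) - 1/2 = δ := by ring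

lemma hasDerivAt_xf {δ : ℝ} (hδ1 : 0 < δ) (t : ℝ) :
    HasDerivAt (xf δ) (xf1 δ t) t := by
  have hc12 : (1/2 - δ : ℝ) ≤ 1/2 + δ := by linarith
  have hInner : ∀ u, HasDerivAt
      (fun v => if v ≤ 1/2 + δ then Pp δ (v - 1/2) else 1 - v)
      (if u ≤ 1/2 + δ then Pd δ (u - 1/2) else -1) u := by
    refine glueDeriv (fun v => hasDerivAt_Pp δ v) (fun v => (hasDerivAt_id v).const_sub 1) ?_ ?_
    · rw [e_right δ, Pp_right hδ1.ne']; ring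
    · rw [e_right δ, Pd_right hδ1.ne']
  refine glueDeriv (fun v => hasDerivAt_id v) hInner ?_ ?_ t
  · rw [if_pos hc12, e_left δ, Pp_left hδ1.ne']; rfl
  · rw [if_pos hc12, e_left δ, Pd_left hδ1.ne']

lemma hasDerivAt_xf1 {δ : ℝ} (hδ1 : 0 < δ) (t : ℝ) :
    HasDerivAt (xf1 δ) (xf2 δ t) t := by
  have hc12 : (1/2 - δ : ℝ) ≤ 1/2 + δ := by linarith
  have hInner : ∀ u, HasDerivAt
      (fun v => if v ≤ 1/2 + δ then Pd δ (v - 1/2) else -1)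
      (if u ≤ 1/2 + δ then Pdd δ (u - 1/2) else 0) u := by
    refine glueDeriv (fun v => hasDerivAt_Pd δ v) (fun v => hasDerivAt_const v (-1)) ?_ ?_
    · rw [e_right δ, Pd_right hδ1.ne']
    · rw [e_right δ, Pdd_right hδ1.ne']
  refine glueDeriv (fun v => hasDerivAt_const v 1) hInner ?_ ?_ t
  · rw [if_pos hc12, e_left δ, Pd_left hδ1.ne']
  · rw [if_pos hc12, e_left δ, Pdd_left hδ1.ne']

lemma A_nonpos_left {δ t : ℝ} (hδ1 : 0 < δ) (h : t ≤ 1/2 - δ) :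
    3/(2*δ^3) * (δ^2 - (t - 1/2)^2) ≤ 0 := by
  have h1 : δ^2 - (t - 1/2)^2 ≤ 0 := by nlinarith
  have h2 : (0:ℝ) ≤ 3/(2*δ^3) := by positivity
  exact mul_nonpos_iff.mpr (Or.inl ⟨h2, h1⟩)

lemma A_nonpos_right {δ t : ℝ} (hδ1 : 0 < δ) (h : 1/2 + δ ≤ t) :
    3/(2*δ^3) * (δ^2 - (t - 1/2)^2) ≤ 0 := by
  have h1 : δ^2 - (t - 1/2)^2 ≤ 0 := by nlinarith
  have h2 : (0:ℝ) ≤ 3/(2*δ^3) := by positivity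
  exact mul_nonpos_iff.mpr (Or.inl ⟨h2, h1⟩)

lemma sol_eq {δ : ℝ} (hδ1 : 0 < δ) (hδ2 : δ ≤ 1/4) (t : ℝ) :
    xf2 δ t + qf δ t * xf δ t = 0 := by
  unfold xf2 qf xf
  by_cases h1 : t ≤ 1/2 - δ
  · rw [if_pos h1, if_pos h1, max_eq_right (A_nonpos_left hδ1 h1)]
    simp
  · by_cases h2 : t ≤ 1/2 + δ
    · rw [if_neg h1, if_neg h1, if_pos h2, if_pos h2]
      have hA : 0 ≤ 3/(2*δ^3) * (δ^2 - (t - 1/2)^2) := by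
        have h1' : (0:ℝ) ≤ δ^2 - (t - 1/2)^2 := by
          push_neg at h1; nlinarith
        positivity
      rw [max_eq_left hA, div_mul_cancel₀ _ (Pp_pos hδ1 hδ2 (t - 1/2)).ne']
      unfold Pdd; field_simp; ring
    · rw [if_neg h1, if_neg h1, if_neg h2, if_neg h2,
        max_eq_right (A_nonpos_right hδ1 (le_of_not_ge h2))]
      simp

lemma qf_cont {δ : ℝ} (hδ1 : 0 < δ) (hδ2 : δ ≤ 1/4) : Continuous (qf δ) := by
  unfold qf
  apply Continuous.div
  · apply Continuous.max _ continuous_const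
    fun_prop
  · unfold Pp; fun_prop
  · exact fun t => (Pp_pos hδ1 hδ2 (t - 1/2)).ne'

lemma qf_nonneg {δ : ℝ} (hδ1 : 0 < δ) (hδ2 : δ ≤ 1/4) (t : ℝ) : 0 ≤ qf δ t :=
  div_nonneg (le_max_right _ _) (Pp_pos hδ1 hδ2 (t - 1/2)).le

end LyapSharpAux2

section LyapIntegral

lemma integral_qf {δ : ℝ} (hδ1 : 0 < δ) (hδ2 : δ ≤ 1/4) :
    (∫ t in (0:ℝ)..1, qf δ t) ≤ 2/(1/2 - δ) := by
  have hhalf : (0:ℝ) < 1/2 - δ := by linarith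
  have hc1 : (0:ℝ) ≤ 1/2 - δ := by linarith
  have hc2 : (1/2 - δ:ℝ) ≤ 1/2 + δ := by linarith
  have hc3 : (1/2 + δ:ℝ) ≤ 1 := by linarith
  have contA : Continuous (fun t : ℝ => 3/(2*δ^3) * (δ^2 - (t - 1/2)^2)) := by fun_prop
  have contM : Continuous (fun t : ℝ => max (3/(2*δ^3) * (δ^2 - (t - 1/2)^2)) 0) :=
    contA.max continuous_const
  have contq : Continuous (qf δ) := qf_cont hδ1 hδ2
  have hmono : (∫ t in (0:ℝ)..1, qf δ t) ≤
      ∫ t in (0:ℝ)..1, max (3/(2*δ^3) * (δ^2 - (t - 1/2)^2)) 0 / (1/2 - δ) := by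
    apply integral_mono_on (by norm_num) (contq.intervalIntegrable _ _)
      ((contM.div_const _).intervalIntegrable _ _)
    intro t _
    rcases le_or_gt (3/(2*δ^3) * (δ^2 - (t - 1/2)^2)) 0 with hA | hA
    · show max _ 0 / Pp δ (t - 1/2) ≤ _
      rw [max_eq_right hA]
      simp
    · have hs : (t - 1/2)^2 ≤ δ^2 := by
        by_contra hcon
        push_neg at hcon
        have hfac : (0:ℝ) ≤ 3/(2*δ^3) := by positivity
        have : 3/(2*δ^3) * (δ^2 - (t - 1/2)^2) ≤ 0 :=
          mul_nonpos_iff.mpr (Or.inl ⟨hfac, by linarith⟩)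
        linarith
      show max _ 0 / Pp δ (t - 1/2) ≤ _
      rw [div_le_div_iff₀ (Pp_pos hδ1 hδ2 _) hhalf]
      exact mul_le_mul_of_nonneg_left (Pp_ge hδ1 hs) (le_max_right _ _)
  have i1 : IntervalIntegrable (fun t : ℝ => max (3/(2*δ^3) * (δ^2 - (t - 1/2)^2)) 0)
      volume 0 (1/2 - δ) := contM.intervalIntegrable _ _
  have i2 : IntervalIntegrable (fun t : ℝ => max (3/(2*δ^3) * (δ^2 - (t - 1/2)^2)) 0)
      volume (1/2 - δ) (1/2 + δ) := contM.intervalIntegrable _ _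
  have i3 : IntervalIntegrable (fun t : ℝ => max (3/(2*δ^3) * (δ^2 - (t - 1/2)^2)) 0)
      volume (1/2 + δ) 1 := contM.intervalIntegrable _ _
  have i23 : IntervalIntegrable (fun t : ℝ => max (3/(2*δ^3) * (δ^2 - (t - 1/2)^2)) 0)
      volume (1/2 - δ) 1 := contM.intervalIntegrable _ _
  have p1 : (∫ t in (0:ℝ)..(1/2 - δ), max (3/(2*δ^3) * (δ^2 - (t - 1/2)^2)) 0) = 0 := by
    have heq : EqOn (fun t : ℝ => max (3/(2*δ^3) * (δ^2 - (t - 1/2)^2)) 0)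
        (fun _ => (0:ℝ)) (uIcc 0 (1/2 - δ)) := by
      intro t ht
      rw [uIcc_of_le hc1] at ht
      exact max_eq_right (A_nonpos_left hδ1 ht.2)
    rw [integral_congr heq]
    simp
  have p3 : (∫ t in (1/2 + δ:ℝ)..1, max (3/(2*δ^3) * (δ^2 - (t - 1/2)^2)) 0) = 0 := by
    have heq : EqOn (fun t : ℝ => max (3/(2*δ^3) * (δ^2 - (t - 1/2)^2)) 0)
        (fun _ => (0:ℝ)) (uIcc (1/2 + δ) 1) := by
      intro t ht
      rw [uIcc_of_le hc3] at ht
      exact max_eq_right (A_nonpos_right hδ1 ht.1)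
    rw [integral_congr heq]
    simp
  have p2 : (∫ t in (1/2 - δ:ℝ)..(1/2 + δ), max (3/(2*δ^3) * (δ^2 - (t - 1/2)^2)) 0) = 2 := by
    have heq : EqOn (fun t : ℝ => max (3/(2*δ^3) * (δ^2 - (t - 1/2)^2)) 0)
        (fun t : ℝ => 3/(2*δ^3) * (δ^2 - (t - 1/2)^2)) (uIcc (1/2 - δ) (1/2 + δ)) := by
      intro t ht
      rw [uIcc_of_le hc2] at ht
      apply max_eq_left
      have h1' : (0:ℝ) ≤ δ^2 - (t - 1/2)^2 := by
        obtain ⟨ha, hb⟩ := ht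
        nlinarith
      positivity
    rw [integral_congr heq]
    have hF : ∀ u ∈ uIcc (1/2 - δ:ℝ) (1/2 + δ),
        HasDerivAt (fun v : ℝ => 3/(2*δ^3) * (δ^2 * v - (v - 1/2)^3/3))
          (3/(2*δ^3) * (δ^2 - (u - 1/2)^2)) u := by
      intro u _
      have h3 : HasDerivAt (fun v : ℝ => (v - 1/2)^3) (3*(u - 1/2)^2) u := by
        simpa using ((hasDerivAt_id u).sub_const (1/2 : ℝ)).fun_pow 3
      have key := (((hasDerivAt_id u).const_mul (δ^2)).sub (h3.div_const 3)).const_mul (3/(2*δ^3))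
      have e : 3/(2*δ^3) * (δ^2 - (u - 1/2)^2)
          = 3/(2*δ^3) * (δ^2 * 1 - 3*(u - 1/2)^2/3) := by ring
      rw [e]; exact key
    rw [integral_eq_sub_of_hasDerivAt hF (contA.intervalIntegrable _ _)]
    field_simp
    ring
  calc (∫ t in (0:ℝ)..1, qf δ t)
      ≤ ∫ t in (0:ℝ)..1, max (3/(2*δ^3) * (δ^2 - (t - 1/2)^2)) 0 / (1/2 - δ) := hmono
    _ = (∫ t in (0:ℝ)..1, max (3/(2*δ^3) * (δ^2 - (t - 1/2)^2)) 0) / (1/2 - δ) :=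
        integral_div _ _
    _ = 2/(1/2 - δ) := by
        rw [← integral_add_adjacent_intervals i1 i23,
          ← integral_add_adjacent_intervals i2 i3, p1, p2, p3]
        norm_num

end LyapIntegral


/-- sharpness of the constant `4` in Lyapunov's criterion. -/
theorem lyapunov_constant_sharp :
    ∀ ε > (0 : ℝ), ∃ q : ℝ → ℝ,
      ContinuousOn q (Icc 0 1) ∧
      (∀ t ∈ Icc (0 : ℝ) 1, 0 ≤ q t) ∧
      (∫ t in (0 : ℝ)..1, q t) ≤ 4 + ε ∧
      ∃ x : ℝ → ℝ, IsSolOn (fun _ => 0) q x (Icc 0 1) ∧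
        (∃ t ∈ Icc (0 : ℝ) 1, x t ≠ 0) ∧
        ∃ s ∈ Icc (0 : ℝ) 1, ∃ r ∈ Icc (0 : ℝ) 1, s ≠ r ∧ x s = 0 ∧ x r = 0 := by
  intro ε hε
  set δ : ℝ := min (ε/32) (1/4) with hδdef
  have hδ1 : 0 < δ := lt_min (by positivity) (by norm_num)
  have hδ2 : δ ≤ 1/4 := min_le_right _ _
  have hδε : 16*δ ≤ ε := by
    have h := min_le_left (ε/32) (1/4)
    have : δ ≤ ε/32 := h
    linarith
  have hdx : deriv (xf δ) = xf1 δ := funext fun t => (hasDerivAt_xf hδ1 t).deriv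
  refine ⟨qf δ, (qf_cont hδ1 hδ2).continuousOn, fun t _ => qf_nonneg hδ1 hδ2 t, ?_, xf δ,
    ⟨fun t _ => ?_, fun t _ => ?_, fun t _ => ?_⟩, ⟨1/2, by norm_num, ?_⟩,
    0, by norm_num, 1, by norm_num, by norm_num, ?_, ?_⟩
  · -- integral bound
    calc (∫ t in (0:ℝ)..1, qf δ t) ≤ 2/(1/2 - δ) := integral_qf hδ1 hδ2
      _ ≤ 4 + ε := by
          rw [div_le_iff₀ (by linarith : (0:ℝ) < 1/2 - δ)]
          nlinarith [mul_le_mul_of_nonneg_left hδ2 hε.le]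
  · -- first derivative
    rw [hdx]
    exact hasDerivAt_xf hδ1 t
  · -- second derivative
    rw [hdx, (hasDerivAt_xf1 hδ1 t).deriv]
    exact hasDerivAt_xf1 hδ1 t
  · -- the equation
    rw [hdx, (hasDerivAt_xf1 hδ1 t).deriv]
    have := sol_eq hδ1 hδ2 t
    simp only [zero_mul]
    linarith [sol_eq hδ1 hδ2 t]
  · -- nontrivial at 1/2
    have h1 : ¬ ((1/2:ℝ) ≤ 1/2 - δ) := by push_neg; linarith
    have h2 : (1/2:ℝ) ≤ 1/2 + δ := by linarith
    unfold xf
    rw [if_neg h1, if_pos h2]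
    exact (Pp_pos hδ1 hδ2 _).ne'
  · -- zero at 0
    have h1 : (0:ℝ) ≤ 1/2 - δ := by linarith
    unfold xf
    rw [if_pos h1]
  · -- zero at 1
    have h1 : ¬ ((1:ℝ) ≤ 1/2 - δ) := by push_neg; linarith
    have h2 : ¬ ((1:ℝ) ≤ 1/2 + δ) := by push_neg; linarith
    unfold xf
    rw [if_neg h1, if_neg h2]
    norm_num
end
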